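/- Let G be a clique-grid graph with representation f, and let T be a k-Steiner tree for terminal set R that minimizes the number of edges uv ∈ E(T) with f(u) ≠ f(v) among all k-Steiner trees. Then for any cell C = (i,j), every other cell C' contains at most one vertex of T that is a T-neighbor of some vertex of C; consequently, the number of edges of T with exactly one endpoint in cell C is at most 24. -/

import Mathlib

open SimpleGraph

variable {V : Type*}

def IsSteinerTree (G : SimpleGraph V) (R : Set V) (T : G.Subgraph) : Prop :=
  T.coe.IsTree ∧ R ⊆ T.verts

def IsRepresentation (G : SimpleGraph V) (f : V → ℤ × ℤ) : Prop :=
  (∀ u v, u ≠ v → f u = f v → G.Adj u v) ∧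
  (∀ u v, G.Adj u v → |(f u).1 - (f v).1| ≤ 2 ∧ |(f u).2 - (f v).2| ≤ 2)

/-- The edges of `T` whose endpoints lie in distinct cells. -/
def interCellEdges (G : SimpleGraph V) (f : V → ℤ × ℤ) (T : G.Subgraph) : Set (Sym2 V) :=
  {e ∈ T.edgeSet | ∃ u v, e = s(u, v) ∧ f u ≠ f v}

/-! ### Auxiliary lemmas -/

private lemma sym2_subtype_eq {S : Set V} (v w p q : ↥S) :
    s(v, w) = s(p, q) ↔ s((v : V), (w : V)) = s((p : V), (q : V)) := by
  constructor
  · intro h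
    rw [← Sym2.map_pair_eq Subtype.val, ← Sym2.map_pair_eq Subtype.val, h]
  · intro h
    apply Sym2.map.injective Subtype.val_injective
    rwa [Sym2.map_pair_eq, Sym2.map_pair_eq]

/-- After deleting an edge of a graph, every vertex reachable to `a` is still reachable
to `a` or to `b`. -/
private lemma two_sides {α : Type*} {Γ : SimpleGraph α} {a b v : α}
    (h : Γ.Reachable v a) :
    (Γ.deleteEdges {s(a, b)}).Reachable v a ∨ (Γ.deleteEdges {s(a, b)}).Reachable v b := by
  obtain ⟨p⟩ := h
  induction p with
  | nil => exact Or.inl (Reachable.refl _)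
  | @cons u w z hadj q ih =>
    by_cases he : s(u, w) = s(z, b)
    · rcases Sym2.eq_iff.mp he with ⟨rfl, rfl⟩ | ⟨rfl, rfl⟩
      · exact Or.inl (Reachable.refl _)
      · exact Or.inr (Reachable.refl _)
    · have hd : (Γ.deleteEdges {s(z, b)}).Adj u w := by
        rw [deleteEdges_adj]
        exact ⟨hadj, by simpa using he⟩
      rcases ih with h' | h'
      · exact Or.inl (hd.reachable.trans h')
      · exact Or.inr (hd.reachable.trans h')

/-- Exchanging an edge of a tree for an edge joining the two sides gives a tree. -/
private lemma isTree_rewire {α : Type*} {Γ : SimpleGraph α} (hΓ : Γ.IsTree) {a b x y : α}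
    (hxy : x ≠ y)
    (hnr : ¬ (Γ.deleteEdges {s(a, b)}).Reachable x y) :
    (Γ.deleteEdges {s(a, b)} ⊔ fromEdgeSet {s(x, y)}).IsTree := by
  have hle : Γ.deleteEdges {s(a, b)} ≤ Γ.deleteEdges {s(a, b)} ⊔ fromEdgeSet {s(x, y)} :=
    le_sup_left
  have hallv : ∀ v : α, (Γ.deleteEdges {s(a, b)}).Reachable v a ∨
      (Γ.deleteEdges {s(a, b)}).Reachable v b :=
    fun v => two_sides (hΓ.isConnected.preconnected v a)
  have hxy' : (Γ.deleteEdges {s(a, b)} ⊔ fromEdgeSet {s(x, y)}).Adj x y := by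
    rw [sup_adj, fromEdgeSet_adj]
    exact Or.inr ⟨rfl, hxy⟩
  have hab' : (Γ.deleteEdges {s(a, b)} ⊔ fromEdgeSet {s(x, y)}).Reachable a b := by
    rcases hallv x with hxa | hxb
    · rcases hallv y with hya | hyb
      · exact absurd (hxa.trans hya.symm) hnr
      · exact (hxa.mono hle).symm.trans (hxy'.reachable.trans (hyb.mono hle))
    · rcases hallv y with hya | hyb
      · exact (hya.mono hle).symm.trans (hxy'.symm.reachable.trans (hxb.mono hle))
      · exact absurd (hxb.trans hyb.symm) hnr
  constructor
  · rw [connected_iff]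
    refine ⟨fun u v => ?_, ⟨x⟩⟩
    rcases hallv u with h1 | h1 <;> rcases hallv v with h2 | h2
    · exact (h1.mono hle).trans (h2.mono hle).symm
    · exact (h1.mono hle).trans (hab'.trans (h2.mono hle).symm)
    · exact (h1.mono hle).trans (hab'.symm.trans (h2.mono hle).symm)
    · exact (h1.mono hle).trans (h2.mono hle).symm
  · intro v c hc
    by_cases hm : s(x, y) ∈ c.edges
    · have hcyc := (adj_and_reachable_delete_edges_iff_exists_cycle
        (G := Γ.deleteEdges {s(a, b)} ⊔ fromEdgeSet {s(x, y)}) (v := x) (w := y)).mpr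
        ⟨v, c, hc, hm⟩
      apply hnr
      refine hcyc.2.mono ?_
      intro p q hpq
      rw [deleteEdges_adj] at hpq
      rcases hpq with ⟨hpq1, hpq2⟩
      rw [sup_adj] at hpq1
      rcases hpq1 with h | h
      · exact h
      · exact absurd ((fromEdgeSet_adj _).mp h).1 hpq2
    · have hsub : ∀ e ∈ c.edges,
          e ∈ Γ.edgeSet := by
        intro e he
        have h := c.edges_subset_edgeSet he
        rw [edgeSet_sup] at h
        rcases h with h | h
        · rw [edgeSet_deleteEdges] at h
          exact h.1
        · rw [edgeSet_fromEdgeSet] at h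
          exact absurd (h.1 ▸ he) hm
      exact hΓ.IsAcyclic (c.transfer Γ hsub) (hc.transfer hsub)

/-- The rewired subgraph: delete edge `ab` and add edge `xy`. -/
private def rewireSub (G : SimpleGraph V) (T : G.Subgraph) (a b : V) {x y : V}
    (hGxy : G.Adj x y) (hx : x ∈ T.verts) (hy : y ∈ T.verts) : G.Subgraph where
  verts := T.verts
  Adj v w := (T.Adj v w ∧ s(v, w) ≠ s(a, b)) ∨ s(v, w) = s(x, y)
  adj_sub := by
    rintro v w (⟨h, -⟩ | h)
    · exact T.adj_sub h
    · rcases Sym2.eq_iff.mp h with ⟨rfl, rfl⟩ | ⟨rfl, rfl⟩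
      · exact hGxy
      · exact hGxy.symm
  edge_vert := by
    rintro v w (⟨h, -⟩ | h)
    · exact T.edge_vert h
    · rcases Sym2.eq_iff.mp h with ⟨rfl, rfl⟩ | ⟨rfl, rfl⟩
      · exact hx
      · exact hy
  symm := by
    constructor
    rintro v w (⟨h, hne⟩ | h)
    · exact Or.inl ⟨h.symm, by rwa [Sym2.eq_swap]⟩
    · exact Or.inr (by rwa [Sym2.eq_swap])

/-- If `T` minimizes inter-cell edges, we cannot exchange an inter-cell edge for an
intra-cell edge. -/
private lemma improve [Fintype V] {G : SimpleGraph V} {f : V → ℤ × ℤ} {R : Set V} {k : ℕ}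
    {T : G.Subgraph}
    (hT : IsSteinerTree G R T ∧ (T.verts \ R).ncard ≤ k)
    (hmin : ∀ T' : G.Subgraph, IsSteinerTree G R T' ∧ (T'.verts \ R).ncard ≤ k →
      (interCellEdges G f T).ncard ≤ (interCellEdges G f T').ncard)
    {a b x y : V} (hab : T.Adj a b) (hfab : f a ≠ f b)
    (hGxy : G.Adj x y) (hfxy : f x = f y) (hx : x ∈ T.verts) (hy : y ∈ T.verts)
    (hnr : ¬ (T.coe.deleteEdges
        {s((⟨a, T.edge_vert hab⟩ : T.verts), (⟨b, T.edge_vert hab.symm⟩ : T.verts))}).Reachable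
        ⟨x, hx⟩ ⟨y, hy⟩) : False := by
  classical
  set T' : G.Subgraph := rewireSub G T a b hGxy hx hy with hT'def
  have hxny : x ≠ y := hGxy.ne
  have hcoe : T'.coe = T.coe.deleteEdges
      {s((⟨a, T.edge_vert hab⟩ : T.verts), (⟨b, T.edge_vert hab.symm⟩ : T.verts))} ⊔
      fromEdgeSet {s((⟨x, hx⟩ : T.verts), (⟨y, hy⟩ : T.verts))} := by
    ext v w
    simp only [Subgraph.coe_adj, sup_adj, deleteEdges_adj, fromEdgeSet_adj,
      Set.mem_singleton_iff]
    constructor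
    · rintro (⟨h, hne⟩ | h)
      · exact Or.inl ⟨h, fun hc => hne ((sym2_subtype_eq _ _ _ _).mp
          (Set.mem_singleton_iff.mp ((fromEdgeSet_adj _).mp hc).1))⟩
      · refine Or.inr ⟨(sym2_subtype_eq _ _ _ _).mpr h, fun hvw => hxny ?_⟩
        subst hvw
        rcases Sym2.eq_iff.mp h with ⟨h1, h2⟩ | ⟨h1, h2⟩ <;> rw [← h1, ← h2]
    · rintro (⟨h, hne⟩ | ⟨h, -⟩)
      · exact Or.inl ⟨h, fun hc => hne ((fromEdgeSet_adj _).mpr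
          ⟨Set.mem_singleton_iff.mpr ((sym2_subtype_eq _ _ _ _).mpr hc),
            fun hvw => by subst hvw; exact h.ne rfl⟩)⟩
      · exact Or.inr ((sym2_subtype_eq _ _ _ _).mp h)
  have hxy' : (⟨x, hx⟩ : T.verts) ≠ ⟨y, hy⟩ := fun h => hxny (congrArg Subtype.val h)
  have htree' : T'.coe.IsTree := by
    rw [hcoe]
    exact isTree_rewire hT.1.1 hxy' hnr
  have hsub : interCellEdges G f T' ⊆ interCellEdges G f T \ {s(a, b)} := by
    rintro e ⟨heE, u, v, rfl, hfuv⟩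
    rw [Subgraph.mem_edgeSet] at heE
    rcases heE with ⟨h, hne⟩ | h
    · exact ⟨⟨Subgraph.mem_edgeSet.mpr h, u, v, rfl, hfuv⟩, by simpa using hne⟩
    · exfalso
      rcases Sym2.eq_iff.mp h with ⟨rfl, rfl⟩ | ⟨rfl, rfl⟩
      · exact hfuv hfxy
      · exact hfuv hfxy.symm
  have hmem : s(a, b) ∈ interCellEdges G f T :=
    ⟨Subgraph.mem_edgeSet.mpr hab, a, b, rfl, hfab⟩
  have hss : interCellEdges G f T' ⊂ interCellEdges G f T :=
    Set.ssubset_of_subset_of_ssubset hsub (Set.sdiff_singleton_ssubset.mpr hmem)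
  have hlt := Set.ncard_lt_ncard hss (Set.toFinite _)
  have hge := hmin T' ⟨⟨htree', hT.1.2⟩, hT.2⟩
  omega

/-- Key lemma: at most one `T`-edge between any two distinct cells `c`, `c'`. -/
private lemma key [Fintype V] {G : SimpleGraph V} {f : V → ℤ × ℤ}
    (hf : IsRepresentation G f) {R : Set V} {k : ℕ} {T : G.Subgraph}
    (hT : IsSteinerTree G R T ∧ (T.verts \ R).ncard ≤ k)
    (hmin : ∀ T' : G.Subgraph, IsSteinerTree G R T' ∧ (T'.verts \ R).ncard ≤ k →
      (interCellEdges G f T).ncard ≤ (interCellEdges G f T').ncard)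
    {c c' : ℤ × ℤ} (hcc : c ≠ c') {u₁ v₁ u₂ v₂ : V}
    (h1 : T.Adj u₁ v₁) (h2 : T.Adj u₂ v₂)
    (hu1 : f u₁ = c) (hu2 : f u₂ = c) (hv1 : f v₁ = c') (hv2 : f v₂ = c') :
    s(u₁, v₁) = s(u₂, v₂) := by
  by_contra hne
  have htree := hT.1.1
  have hfu2v2 : f u₂ ≠ f v₂ := by rw [hu2, hv2]; exact hcc
  have hnr2 : ¬ (T.coe.deleteEdges
      {s((⟨u₂, T.edge_vert h2⟩ : T.verts), (⟨v₂, T.edge_vert h2.symm⟩ : T.verts))}).Reachable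
      ⟨u₂, T.edge_vert h2⟩ ⟨v₂, T.edge_vert h2.symm⟩ := by
    intro hr
    obtain ⟨w, p, hp, -⟩ := (adj_and_reachable_delete_edges_iff_exists_cycle
      (G := T.coe) (v := ⟨u₂, T.edge_vert h2⟩) (w := ⟨v₂, T.edge_vert h2.symm⟩)).mp ⟨h2, hr⟩
    exact htree.IsAcyclic p hp
  have hD1 : (T.coe.deleteEdges
      {s((⟨u₂, T.edge_vert h2⟩ : T.verts), (⟨v₂, T.edge_vert h2.symm⟩ : T.verts))}).Adj
      ⟨u₁, T.edge_vert h1⟩ ⟨v₁, T.edge_vert h1.symm⟩ := by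
    rw [deleteEdges_adj]
    refine ⟨h1, ?_⟩
    rw [Set.mem_singleton_iff]
    intro hcon
    exact hne ((sym2_subtype_eq _ _ _ _).mp hcon)
  have hside := two_sides (Γ := T.coe) (b := ⟨v₂, T.edge_vert h2.symm⟩)
    (htree.isConnected.preconnected ⟨v₁, T.edge_vert h1.symm⟩ ⟨u₂, T.edge_vert h2⟩)
  rcases hside with hA | hB
  · have hvne : v₁ ≠ v₂ := by
      rintro rfl
      exact hnr2 hA.symm
    have hGv : G.Adj v₁ v₂ := hf.1 v₁ v₂ hvne (hv1.trans hv2.symm)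
    have hnrv : ¬ (T.coe.deleteEdges
        {s((⟨u₂, T.edge_vert h2⟩ : T.verts), (⟨v₂, T.edge_vert h2.symm⟩ : T.verts))}).Reachable
        ⟨v₁, T.edge_vert h1.symm⟩ ⟨v₂, T.edge_vert h2.symm⟩ :=
      fun hr => hnr2 (hA.symm.trans hr)
    exact improve hT hmin h2 hfu2v2 hGv (hv1.trans hv2.symm)
      (T.edge_vert h1.symm) (T.edge_vert h2.symm) hnrv
  · have hru1 : (T.coe.deleteEdges
        {s((⟨u₂, T.edge_vert h2⟩ : T.verts), (⟨v₂, T.edge_vert h2.symm⟩ : T.verts))}).Reachable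
        ⟨u₁, T.edge_vert h1⟩ ⟨v₂, T.edge_vert h2.symm⟩ :=
      hD1.reachable.trans hB
    have hune : u₂ ≠ u₁ := by
      rintro rfl
      exact hnr2 hru1
    have hGu : G.Adj u₂ u₁ := hf.1 u₂ u₁ hune (hu2.trans hu1.symm)
    have hnru : ¬ (T.coe.deleteEdges
        {s((⟨u₂, T.edge_vert h2⟩ : T.verts), (⟨v₂, T.edge_vert h2.symm⟩ : T.verts))}).Reachable
        ⟨u₂, T.edge_vert h2⟩ ⟨u₁, T.edge_vert h1⟩ :=
      fun hr => hnr2 (hr.trans hru1)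
    exact improve hT hmin h2 hfu2v2 hGu (hu2.trans hu1.symm)
      (T.edge_vert h2) (T.edge_vert h1) hnru

/-- If `T` is a `k`-Steiner tree minimizing the number of inter-cell edges, then for any cell
`c`: every other cell contains at most one `T`-neighbour of a vertex of `c`, and the number of
edges of `T` with exactly one endpoint in `c` is at most 24. -/
theorem stmt3 [Fintype V] (G : SimpleGraph V) (f : V → ℤ × ℤ) (hf : IsRepresentation G f)
    (R : Set V) (k : ℕ) (T : G.Subgraph)
    (hT : IsSteinerTree G R T ∧ (T.verts \ R).ncard ≤ k)
    (hmin : ∀ T' : G.Subgraph, IsSteinerTree G R T' ∧ (T'.verts \ R).ncard ≤ k →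
      (interCellEdges G f T).ncard ≤ (interCellEdges G f T').ncard)
    (c : ℤ × ℤ) :
    (∀ c' : ℤ × ℤ, c' ≠ c → {v | f v = c' ∧ ∃ u, f u = c ∧ T.Adj u v}.ncard ≤ 1) ∧
    {e ∈ T.edgeSet | ∃ u v, e = s(u, v) ∧ f u = c ∧ f v ≠ c}.ncard ≤ 24 := by
  classical
  constructor
  · intro c' hc'
    rw [Set.ncard_le_one_iff (Set.toFinite _)]
    rintro v₁ v₂ ⟨hv1, u₁, hu1, h1⟩ ⟨hv2, u₂, hu2, h2⟩
    have hkey := key hf hT hmin (fun h => hc' h.symm) h1 h2 hu1 hu2 hv1 hv2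
    rcases Sym2.eq_iff.mp hkey with ⟨-, h⟩ | ⟨-, h2'⟩
    · exact h
    · exact absurd (by rw [← hv1, h2', hu2]) hc'
  · set E := {e ∈ T.edgeSet | ∃ u v, e = s(u, v) ∧ f u = c ∧ f v ≠ c} with hE
    set F : Finset (ℤ × ℤ) :=
      (Finset.Icc (c.1 - 2) (c.1 + 2) ×ˢ Finset.Icc (c.2 - 2) (c.2 + 2)).erase c with hF
    have h5 : ∀ t : ℤ, (t + 2 + 1 - (t - 2)).toNat = 5 := fun t => by omega
    have hFcard : F.card = 24 := by
      have hcmem : c ∈ Finset.Icc (c.1 - 2) (c.1 + 2) ×ˢ Finset.Icc (c.2 - 2) (c.2 + 2) := by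
        rw [Finset.mem_product, Finset.mem_Icc, Finset.mem_Icc]
        omega
      rw [hF, Finset.card_erase_of_mem hcmem, Finset.card_product, Int.card_Icc, Int.card_Icc,
        h5, h5]
    have hex : ∀ e ∈ E, ∃ p : V × V, e = s(p.1, p.2) ∧ f p.1 = c ∧ f p.2 ≠ c := by
      rintro e ⟨-, u, v, rfl, hu, hv⟩
      exact ⟨(u, v), rfl, hu, hv⟩
    set g : Sym2 V → ℤ × ℤ := fun e =>
      if h : ∃ p : V × V, e = s(p.1, p.2) ∧ f p.1 = c ∧ f p.2 ≠ c then
        f (Classical.choose h).2 else c with hg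
    have hspec : ∀ e ∈ E, ∃ u v, e = s(u, v) ∧ f u = c ∧ f v ≠ c ∧ g e = f v := by
      intro e he
      have h := hex e he
      obtain ⟨h1, h2, h3⟩ := Classical.choose_spec h
      refine ⟨(Classical.choose h).1, (Classical.choose h).2, h1, h2, h3, ?_⟩
      simp only [hg]
      rw [dif_pos h]
    have hmapsTo : ∀ e ∈ E, g e ∈ (F : Set (ℤ × ℤ)) := by
      intro e he
      obtain ⟨u, v, rfl, hu, hv, hge⟩ := hspec e he
      have hadj : T.Adj u v := Subgraph.mem_edgeSet.mp he.1
      have hb := hf.2 u v (T.adj_sub hadj)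
      rw [hu] at hb
      obtain ⟨b1, b2⟩ := hb
      rw [abs_le] at b1 b2
      rw [hge, Finset.mem_coe, hF, Finset.mem_erase]
      refine ⟨hv, ?_⟩
      rw [Finset.mem_product, Finset.mem_Icc, Finset.mem_Icc]
      omega
    have hinj : Set.InjOn g E := by
      intro e1 he1 e2 he2 hgeq
      obtain ⟨u1, w1, rfl, hu1, hw1, hge1⟩ := hspec e1 he1
      obtain ⟨u2, w2, rfl, hu2, hw2, hge2⟩ := hspec e2 he2
      have hadj1 : T.Adj u1 w1 := Subgraph.mem_edgeSet.mp he1.1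
      have hadj2 : T.Adj u2 w2 := Subgraph.mem_edgeSet.mp he2.1
      have hfv : f w2 = f w1 := by rw [← hge1, ← hge2, hgeq]
      exact key hf hT hmin (fun h => hw1 h.symm) hadj1 hadj2 hu1 hu2 rfl hfv
    calc E.ncard ≤ (F : Set (ℤ × ℤ)).ncard :=
          Set.ncard_le_ncard_of_injOn g hmapsTo hinj (Set.toFinite _)
      _ = 24 := by rw [Set.ncard_coe_finset, hFcard]
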